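/- arXiv:2512.23816 — 2 statements merged into one kernel-verified Lean document; each statement's English description precedes it below -/
import Mathlib

section
/- Let x ∈ [-X, X] and y ∈ [-Y, Y] with X ≥ 0 and Y ≥ 1, and let σ be the sigmoid function. Then |x - y| ≤ 8(X + Y)·e^{2Y}·|σ(x) - σ(y)|. -/
noncomputable def sigmoid (x : ℝ) : ℝ := 1 / (1 + Real.exp (-x))

lemma sigmoid_hasDerivAt (t : ℝ) :
    HasDerivAt sigmoid (Real.exp (-t) / (1 + Real.exp (-t))^2) t := by
  have h1 : HasDerivAt (fun x : ℝ => 1 + Real.exp (-x)) (-Real.exp (-t)) t := by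
    have := ((Real.hasDerivAt_exp (-t)).comp t ((hasDerivAt_id t).neg))
    simpa using this.const_add 1
  have hne : 1 + Real.exp (-t) ≠ 0 := by positivity
  have := h1.inv hne
  simp only [neg_neg] at this
  have heq : sigmoid = fun x => (1 + Real.exp (-x))⁻¹ := by
    funext x; simp [sigmoid]
  rw [heq]
  exact this

lemma sigmoid_mono : Monotone sigmoid := by
  intro a b hab
  have h : Real.exp (-b) ≤ Real.exp (-a) := Real.exp_le_exp.2 (by linarith)
  exact one_div_le_one_div_of_le (by positivity) (by linarith)

lemma sigmoid_gap (M a b : ℝ) (haM : -M ≤ a) (hbM : b ≤ M) (hab : a ≤ b) :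
    b - a ≤ 4 * Real.exp M * (sigmoid b - sigmoid a) := by
  rcases eq_or_lt_of_le hab with h | h
  · subst h; simp
  · obtain ⟨c, hc, hceq⟩ := exists_hasDerivAt_eq_slope sigmoid _ h
      (fun t _ => (sigmoid_hasDerivAt t).continuousAt.continuousWithinAt)
      (fun t _ => sigmoid_hasDerivAt t)
    have hc1 : -M ≤ c := le_trans haM (le_of_lt hc.1)
    have hc2 : c ≤ M := le_trans (le_of_lt hc.2) hbM
    have hu : (0:ℝ) < Real.exp (-c) := Real.exp_pos _
    have hv : (0:ℝ) < Real.exp (-M) := Real.exp_pos _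
    have h1 : Real.exp (-M) ≤ Real.exp (-c) := Real.exp_le_exp.2 (by linarith)
    have hvu : Real.exp (-M) * Real.exp (-c) ≤ 1 := by
      rw [← Real.exp_add]; exact Real.exp_le_one_iff.2 (by linarith)
    have hlow : Real.exp (-M) / 4 ≤ Real.exp (-c) / (1 + Real.exp (-c))^2 := by
      rw [div_le_div_iff₀ (by norm_num) (by positivity)]
      nlinarith [sq_nonneg (1 - Real.exp (-c)), mul_nonneg hv.le (sq_nonneg (1 - Real.exp (-c)))]
    have h4 : Real.exp (-M) / 4 ≤ (sigmoid b - sigmoid a) / (b - a) := hceq ▸ hlow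
    have hba : (0:ℝ) < b - a := by linarith
    rw [le_div_iff₀ hba] at h4
    have hEM : Real.exp M * Real.exp (-M) = 1 := by rw [← Real.exp_add]; simp
    nlinarith [Real.exp_pos M, mul_le_mul_of_nonneg_left h4 (Real.exp_pos M).le]

lemma sigmoid_YY (Y : ℝ) (hY : 1 ≤ Y) :
    1 ≤ 8 * Real.exp (2 * Y) * (sigmoid (2 * Y) - sigmoid Y) := by
  set A := Real.exp (-Y) with hA
  have hApos : 0 < A := Real.exp_pos _
  have hA1 : A ≤ 1 := Real.exp_le_one_iff.2 (by linarith)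
  have hE : 2 ≤ Real.exp Y := by nlinarith [Real.add_one_le_exp Y]
  have hEA : Real.exp Y * A = 1 := by rw [hA, ← Real.exp_add]; simp
  have h2A : Real.exp (-(2 * Y)) = A ^ 2 := by
    rw [hA, sq, ← Real.exp_add]; congr 1; ring
  have h2E : Real.exp (2 * Y) = Real.exp Y ^ 2 := by
    rw [sq, ← Real.exp_add]; congr 1; ring
  have hgap : sigmoid (2 * Y) - sigmoid Y = (A - A ^ 2) / ((1 + A ^ 2) * (1 + A)) := by
    unfold sigmoid
    rw [h2A]
    field_simp
    try ring
  have hden : 0 < (1 + A ^ 2) * (1 + A) := by positivity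
  have hden4 : (1 + A ^ 2) * (1 + A) ≤ 4 := by nlinarith
  have hnum : 0 ≤ A - A ^ 2 := by nlinarith
  have hge : (A - A ^ 2) / 4 ≤ sigmoid (2 * Y) - sigmoid Y := by
    rw [hgap]
    exact div_le_div_of_nonneg_left hnum hden hden4
  have : 1 ≤ 8 * Real.exp (2 * Y) * ((A - A ^ 2) / 4) := by
    rw [h2E]
    have : Real.exp Y ^ 2 * A = Real.exp Y := by nlinarith
    nlinarith [Real.exp_pos Y]
  nlinarith [Real.exp_pos (2 * Y), hge]

lemma sigmoid_negYY (Y : ℝ) (hY : 1 ≤ Y) :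
    1 ≤ 8 * Real.exp (2 * Y) * (sigmoid (-Y) - sigmoid (-(2 * Y))) := by
  have hneg : ∀ t : ℝ, sigmoid (-t) = 1 - sigmoid t := by
    intro t
    unfold sigmoid
    have h : Real.exp t * Real.exp (-t) = 1 := by rw [← Real.exp_add]; simp
    have h1 : 0 < 1 + Real.exp (-t) := by positivity
    have h2 : 0 < 1 + Real.exp (-(-t)) := by positivity
    field_simp
    nlinarith [h]
  have := sigmoid_YY Y hY
  rw [hneg Y, hneg (2 * Y)]
  linarith

/-- Inverse-Lipschitz-type inequality for the sigmoid with asymmetric bounds. -/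
theorem sigmoid_inverse_lipschitz_asym (X Y x y : ℝ) (hX : 0 ≤ X) (hY : 1 ≤ Y)
    (hx : x ∈ Set.Icc (-X) X) (hy : y ∈ Set.Icc (-Y) Y) :
    |x - y| ≤ 8 * (X + Y) * Real.exp (2 * Y) * |sigmoid x - sigmoid y| := by
  obtain ⟨hx1, hx2⟩ := hx
  obtain ⟨hy1, hy2⟩ := hy
  have hexp : (0:ℝ) < Real.exp (2 * Y) := Real.exp_pos _
  rcases le_or_gt (|x|) (2 * Y) with hcase | hcase
  · -- both x and y in [-2Y, 2Y]
    obtain ⟨hxl, hxr⟩ := abs_le.1 hcase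
    have hyl : -(2 * Y) ≤ y := by linarith
    have hyr : y ≤ 2 * Y := by linarith
    have hfac : (4:ℝ) ≤ 8 * (X + Y) := by nlinarith
    rcases le_total x y with h | h
    · have hgap := sigmoid_gap (2 * Y) x y hxl hyr h
      have habs1 : |x - y| = y - x := by rw [abs_sub_comm]; exact abs_of_nonneg (by linarith)
      have habs2 : |sigmoid x - sigmoid y| = sigmoid y - sigmoid x := by
        rw [abs_sub_comm]; exact abs_of_nonneg (sub_nonneg.2 (sigmoid_mono h))
      rw [habs1, habs2]
      nlinarith [sub_nonneg.2 (sigmoid_mono h)]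
    · have hgap := sigmoid_gap (2 * Y) y x hyl hxr h
      have habs1 : |x - y| = x - y := abs_of_nonneg (by linarith)
      have habs2 : |sigmoid x - sigmoid y| = sigmoid x - sigmoid y :=
        abs_of_nonneg (sub_nonneg.2 (sigmoid_mono h))
      rw [habs1, habs2]
      nlinarith [sub_nonneg.2 (sigmoid_mono h)]
  · rcases le_or_gt 0 x with hx0 | hx0
    · -- x > 2Y ≥ Y ≥ y
      have hx2Y : 2 * Y < x := by rwa [abs_of_nonneg hx0] at hcase
      have h1 : sigmoid (2 * Y) - sigmoid Y ≤ sigmoid x - sigmoid y := by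
        have := sigmoid_mono hx2Y.le
        have := sigmoid_mono hy2
        linarith
      have hkey := sigmoid_YY Y hY
      have habs1 : |x - y| = x - y := abs_of_nonneg (by linarith)
      have habs2 : |sigmoid x - sigmoid y| = sigmoid x - sigmoid y :=
        abs_of_nonneg (by linarith [sub_nonneg.2 (sigmoid_mono (le_trans hy2 (by linarith : Y ≤ x)))])
      rw [habs1, habs2]
      have hXY : (0:ℝ) < X + Y := by linarith
      have hbound : x - y ≤ X + Y := by linarith
      nlinarith [mul_le_mul_of_nonneg_left h1 (by positivity : (0:ℝ) ≤ 8 * (X + Y) * Real.exp (2 * Y)),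
        mul_le_mul_of_nonneg_left hkey hXY.le]
    · -- x < -2Y ≤ -Y ≤ y
      have hx2Y : x < -(2 * Y) := by
        rw [abs_of_neg hx0] at hcase; linarith
      have h1 : sigmoid (-Y) - sigmoid (-(2 * Y)) ≤ sigmoid y - sigmoid x := by
        have := sigmoid_mono hx2Y.le
        have := sigmoid_mono hy1
        linarith
      have hkey := sigmoid_negYY Y hY
      have hxy : x ≤ y := by linarith
      have habs1 : |x - y| = y - x := by rw [abs_sub_comm]; exact abs_of_nonneg (by linarith)
      have habs2 : |sigmoid x - sigmoid y| = sigmoid y - sigmoid x := by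
        rw [abs_sub_comm]; exact abs_of_nonneg (sub_nonneg.2 (sigmoid_mono hxy))
      rw [habs1, habs2]
      have hXY : (0:ℝ) < X + Y := by linarith
      have hbound : y - x ≤ X + Y := by linarith
      nlinarith [mul_le_mul_of_nonneg_left h1 (by positivity : (0:ℝ) ≤ 8 * (X + Y) * Real.exp (2 * Y)),
        mul_le_mul_of_nonneg_left hkey hXY.le]
end

section
/- Let σ be the sigmoid function and let f, g: X → [-V, V] with V ≥ 1. Then for any probability measure μ on X, E_μ[(f - g)²] ≤ (8·(V + V)·e^{2V})²·E_μ[(σ∘f - σ∘g)²]; more generally with f taking values in [-X₀,X₀] and g in [-Y₀,Y₀], Y₀ ≥ 1, the pointwise bound (f(x)-g(x))² ≤ 64(X₀+Y₀)²e^{4Y₀}(σ(f(x))-σ(g(x)))² holds for all x, and hence the same factor transfers to expectations. -/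
open MeasureTheory

lemma sigmoid_sub (a b : ℝ) : sigmoid a - sigmoid b =
    (Real.exp (-b) - Real.exp (-a)) / ((1 + Real.exp (-a)) * (1 + Real.exp (-b))) := by
  have h1 : 0 < 1 + Real.exp (-a) := by positivity
  have h2 : 0 < 1 + Real.exp (-b) := by positivity
  unfold sigmoid
  field_simp
  ring

lemma sigmoid_mono_s19 {a b : ℝ} (hab : b ≤ a) : sigmoid b ≤ sigmoid a := by
  unfold sigmoid
  have h1 : 0 < 1 + Real.exp (-a) := by positivity
  have h2 : 1 + Real.exp (-a) ≤ 1 + Real.exp (-b) := by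
    have := Real.exp_le_exp.2 (neg_le_neg hab); linarith
  exact one_div_le_one_div_of_le h1 h2

lemma sigmoid_neg (x : ℝ) : sigmoid (-x) = 1 - sigmoid x := by
  unfold sigmoid
  have h1 : 0 < 1 + Real.exp (-x) := by positivity
  have h2 : 0 < 1 + Real.exp x := by positivity
  have hm : Real.exp x * Real.exp (-x) = 1 := by
    rw [← Real.exp_add]; simp
  rw [neg_neg]
  field_simp
  nlinarith

lemma sig_lb1 {Y a b : ℝ} (hY : 0 ≤ Y) (ha : |a| ≤ Y) (hb : |b| ≤ Y) (hab : b ≤ a) :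
    (a - b) / (4 * Real.exp (2 * Y)) ≤ sigmoid a - sigmoid b := by
  rw [sigmoid_sub]
  obtain ⟨ha1, ha2⟩ := abs_le.1 ha
  obtain ⟨hb1, hb2⟩ := abs_le.1 hb
  have hea : (0:ℝ) < Real.exp (-a) := Real.exp_pos _
  have heb : (0:ℝ) < Real.exp (-b) := Real.exp_pos _
  have hY1 : (1:ℝ) ≤ Real.exp Y := by
    have := Real.add_one_le_exp Y; linarith
  have step1 : (a - b) * Real.exp (-a) ≤ Real.exp (-b) - Real.exp (-a) := by
    have h : Real.exp (a - b) * Real.exp (-a) = Real.exp (-b) := by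
      rw [← Real.exp_add]; ring_nf
    nlinarith [Real.add_one_le_exp (a - b)]
  have hfa : 1 ≤ Real.exp Y * Real.exp (-a) := by
    have : Real.exp Y * Real.exp (-a) = Real.exp (Y - a) := by rw [← Real.exp_add]; ring_nf
    rw [this]
    have := Real.add_one_le_exp (Y - a); linarith
  have hfb : Real.exp (-b) ≤ Real.exp Y := Real.exp_le_exp.2 (by linarith)
  have hfa2 : Real.exp (-a) ≤ Real.exp Y := Real.exp_le_exp.2 (by linarith)
  have h2Y : Real.exp (2 * Y) = Real.exp Y * Real.exp Y := by
    rw [← Real.exp_add]; ring_nf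
  have step2 : (1 + Real.exp (-a)) * (1 + Real.exp (-b)) ≤
      4 * Real.exp (2 * Y) * Real.exp (-a) := by
    rw [h2Y]
    nlinarith
  have hd : (0:ℝ) < (1 + Real.exp (-a)) * (1 + Real.exp (-b)) := by positivity
  calc (a - b) / (4 * Real.exp (2 * Y))
      = (a - b) * Real.exp (-a) / (4 * Real.exp (2 * Y) * Real.exp (-a)) := by
        rw [mul_div_mul_right _ _ (ne_of_gt hea)]
    _ ≤ (Real.exp (-b) - Real.exp (-a)) / ((1 + Real.exp (-a)) * (1 + Real.exp (-b))) := by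
        apply div_le_div₀ (by nlinarith) step1 hd step2

lemma sig_lb2 {X Y a : ℝ} (hX : 0 ≤ X) (hY : 1 ≤ Y) (haX : a ≤ X) (haY : Y ≤ a) :
    (a - Y) / (8 * (X + Y) * Real.exp (2 * Y)) ≤ sigmoid a - sigmoid Y := by
  rw [sigmoid_sub]
  have hea : (0:ℝ) < Real.exp (-a) := Real.exp_pos _
  have hey : (0:ℝ) < Real.exp (-Y) := Real.exp_pos _
  have heyle : Real.exp (-Y) ≤ 1 := Real.exp_le_one_iff.2 (by linarith)
  have heale : Real.exp (-a) ≤ 1 := Real.exp_le_one_iff.2 (by linarith)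
  have hs : 0 ≤ a - Y := by linarith
  -- (1+s) * ea ≤ ey
  have hA : (1 + (a - Y)) * Real.exp (-a) ≤ Real.exp (-Y) := by
    have h : Real.exp (a - Y) * Real.exp (-a) = Real.exp (-Y) := by
      rw [← Real.exp_add]; ring_nf
    nlinarith [Real.add_one_le_exp (a - Y)]
  have hB : Real.exp (2 * Y) * Real.exp (-Y) = Real.exp Y := by
    rw [← Real.exp_add]; ring_nf
  have hC : 1 + Y ≤ Real.exp Y := by have := Real.add_one_le_exp Y; linarith
  have hd : (0:ℝ) < (1 + Real.exp (-a)) * (1 + Real.exp (-Y)) := by positivity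
  have hK : (0:ℝ) < 8 * (X + Y) * Real.exp (2 * Y) := by positivity
  rw [div_le_div_iff₀ hK hd]
  -- goal: (a - Y) * ((1+ea)(1+ey)) ≤ (ey - ea) * (8(X+Y)e^{2Y})
  have hnum : 0 ≤ Real.exp (-Y) - Real.exp (-a) := by nlinarith
  have hden4 : (1 + Real.exp (-a)) * (1 + Real.exp (-Y)) ≤ 4 := by nlinarith
  -- key: (ey - ea) * (1 + (a-Y)) ≥ ey * (a-Y)
  have hkey : Real.exp (-Y) * (a - Y) ≤ (Real.exp (-Y) - Real.exp (-a)) * (1 + (a - Y)) := by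
    nlinarith
  have hexpY : (2:ℝ) ≤ Real.exp Y := by linarith
  -- suffices (a-Y)*4*(1+(a-Y)) ≤ (ey-ea)*8(X+Y)e^{2Y}*(1+(a-Y))
  have h1s : (0:ℝ) < 1 + (a - Y) := by linarith
  rw [← mul_le_mul_iff_of_pos_right h1s]
  have hsX : a - Y ≤ X := by linarith
  have hfin : 4 * (1 + (a - Y)) ≤ 8 * (X + Y) * Real.exp Y := by
    nlinarith [mul_le_mul_of_nonneg_left hexpY (by linarith : (0:ℝ) ≤ X + Y)]
  calc (a - Y) * ((1 + Real.exp (-a)) * (1 + Real.exp (-Y))) * (1 + (a - Y))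
      ≤ (a - Y) * 4 * (1 + (a - Y)) := by
        nlinarith [mul_le_mul_of_nonneg_left hden4 (mul_nonneg hs h1s.le)]
    _ = (a - Y) * (4 * (1 + (a - Y))) := by ring
    _ ≤ (a - Y) * (8 * (X + Y) * Real.exp Y) := mul_le_mul_of_nonneg_left hfin hs
    _ = Real.exp (-Y) * (a - Y) * (8 * (X + Y) * Real.exp (2 * Y)) := by rw [← hB]; ring
    _ ≤ (Real.exp (-Y) - Real.exp (-a)) * (1 + (a - Y)) * (8 * (X + Y) * Real.exp (2 * Y)) := by
        exact mul_le_mul_of_nonneg_right hkey hK.le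
    _ = (Real.exp (-Y) - Real.exp (-a)) * (8 * (X + Y) * Real.exp (2 * Y)) * (1 + (a - Y)) := by
        ring

lemma sig_key {X Y a b : ℝ} (hX : 0 ≤ X) (hY : 1 ≤ Y) (ha : |a| ≤ X) (hb : |b| ≤ Y)
    (hab : b ≤ a) :
    a - b ≤ 8 * (X + Y) * Real.exp (2 * Y) * (sigmoid a - sigmoid b) := by
  have hb' := abs_le.1 hb
  have hXY : (1:ℝ) ≤ X + Y := by linarith
  have he2Y : (1:ℝ) ≤ Real.exp (2 * Y) := Real.one_le_exp (by linarith)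
  by_cases hcase : a ≤ Y
  · have ha' : |a| ≤ Y := abs_le.2 ⟨by linarith, hcase⟩
    have h := sig_lb1 (by linarith : (0:ℝ) ≤ Y) ha' hb hab
    have hσ : 0 ≤ sigmoid a - sigmoid b := by
      have := sigmoid_mono_s19 hab; linarith
    rw [div_le_iff₀ (by positivity)] at h
    calc a - b ≤ (sigmoid a - sigmoid b) * (4 * Real.exp (2 * Y)) := h
      _ ≤ (sigmoid a - sigmoid b) * (8 * (X + Y) * Real.exp (2 * Y)) := by
          apply mul_le_mul_of_nonneg_left _ hσ
          nlinarith
      _ = 8 * (X + Y) * Real.exp (2 * Y) * (sigmoid a - sigmoid b) := by ring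
  · push_neg at hcase
    have haX : a ≤ X := (abs_le.1 ha).2
    have h2 := sig_lb2 hX hY haX hcase.le
    have h1 := sig_lb1 (by linarith : (0:ℝ) ≤ Y) (by rw [abs_of_nonneg (by linarith)]) hb hb'.2
    have hσ1 : 0 ≤ sigmoid Y - sigmoid b := by
      have := sigmoid_mono_s19 hb'.2; linarith
    rw [div_le_iff₀ (by positivity)] at h1 h2
    have hstep : (sigmoid Y - sigmoid b) * (4 * Real.exp (2 * Y)) ≤
        (sigmoid Y - sigmoid b) * (8 * (X + Y) * Real.exp (2 * Y)) := by
      apply mul_le_mul_of_nonneg_left _ hσ1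
      nlinarith
    calc a - b = (a - Y) + (Y - b) := by ring
      _ ≤ (sigmoid a - sigmoid Y) * (8 * (X + Y) * Real.exp (2 * Y)) +
          (sigmoid Y - sigmoid b) * (8 * (X + Y) * Real.exp (2 * Y)) := by linarith
      _ = 8 * (X + Y) * Real.exp (2 * Y) * (sigmoid a - sigmoid b) := by ring

lemma sig_abs {X Y a b : ℝ} (hX : 0 ≤ X) (hY : 1 ≤ Y) (ha : |a| ≤ X) (hb : |b| ≤ Y) :
    |a - b| ≤ 8 * (X + Y) * Real.exp (2 * Y) * |sigmoid a - sigmoid b| := by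
  rcases le_total b a with hab | hab
  · have h := sig_key hX hY ha hb hab
    have hσ : sigmoid b ≤ sigmoid a := sigmoid_mono_s19 hab
    rw [abs_of_nonneg (by linarith), abs_of_nonneg (by linarith)]
    exact h
  · have h := sig_key hX hY (by rwa [abs_neg]) (by rwa [abs_neg]) (neg_le_neg hab)
    rw [sigmoid_neg, sigmoid_neg] at h
    have hσ : sigmoid a ≤ sigmoid b := sigmoid_mono_s19 hab
    rw [abs_of_nonpos (by linarith), abs_of_nonpos (by linarith)]
    linarith

lemma sig_sq {X Y a b : ℝ} (hX : 0 ≤ X) (hY : 1 ≤ Y) (ha : |a| ≤ X) (hb : |b| ≤ Y) :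
    (a - b) ^ 2 ≤ 64 * (X + Y) ^ 2 * Real.exp (4 * Y) * (sigmoid a - sigmoid b) ^ 2 := by
  have h := sig_abs hX hY ha hb
  have hK : (0:ℝ) ≤ 8 * (X + Y) * Real.exp (2 * Y) := by positivity
  have h2 : |a - b| ^ 2 ≤ (8 * (X + Y) * Real.exp (2 * Y) * |sigmoid a - sigmoid b|) ^ 2 :=
    pow_le_pow_left₀ (abs_nonneg _) h 2
  have he : Real.exp (2 * Y) * Real.exp (2 * Y) = Real.exp (4 * Y) := by
    rw [← Real.exp_add]; ring_nf
  calc (a - b) ^ 2 = |a - b| ^ 2 := (sq_abs _).symm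
    _ ≤ (8 * (X + Y) * Real.exp (2 * Y) * |sigmoid a - sigmoid b|) ^ 2 := h2
    _ = 64 * (X + Y) ^ 2 * Real.exp (4 * Y) * (sigmoid a - sigmoid b) ^ 2 := by
        rw [mul_pow, mul_pow, mul_pow, sq_abs]
        rw [← he]; ring

lemma sigmoid_nonneg (x : ℝ) : 0 ≤ sigmoid x := by
  unfold sigmoid; positivity

lemma sigmoid_le_one (x : ℝ) : sigmoid x ≤ 1 := by
  unfold sigmoid
  rw [div_le_one (by positivity)]
  nlinarith [Real.exp_pos (-x)]

lemma sigmoid_continuous : Continuous sigmoid := by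
  unfold sigmoid
  exact continuous_const.div (by continuity) (fun x => by positivity)

/-- Squared/expectation version of the inverse-sigmoid-Lipschitz lemma: with f
bounded by X₀ and g bounded by Y₀ ≥ 1, squared reward differences are bounded
by 64(X₀+Y₀)²e^{4Y₀} times squared preference-probability differences, both
pointwise and in expectation. -/
theorem inverse_sigmoid_sq {X : Type*} [MeasurableSpace X] (μ : Measure X)
    [IsProbabilityMeasure μ] (f g : X → ℝ) (X₀ Y₀ : ℝ) (hX₀ : 0 ≤ X₀) (hY₀ : 1 ≤ Y₀)
    (hf : ∀ x, |f x| ≤ X₀) (hg : ∀ x, |g x| ≤ Y₀)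
    (hfm : Measurable f) (hgm : Measurable g) :
    (∀ x, (f x - g x) ^ 2 ≤
        64 * (X₀ + Y₀) ^ 2 * Real.exp (4 * Y₀) * (sigmoid (f x) - sigmoid (g x)) ^ 2) ∧
    (∫ x, (f x - g x) ^ 2 ∂μ ≤
        64 * (X₀ + Y₀) ^ 2 * Real.exp (4 * Y₀) * ∫ x, (sigmoid (f x) - sigmoid (g x)) ^ 2 ∂μ) := by
  have hpt : ∀ x, (f x - g x) ^ 2 ≤
      64 * (X₀ + Y₀) ^ 2 * Real.exp (4 * Y₀) * (sigmoid (f x) - sigmoid (g x)) ^ 2 :=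
    fun x => sig_sq hX₀ hY₀ (hf x) (hg x)
  refine ⟨hpt, ?_⟩
  have hC : (0:ℝ) ≤ 64 * (X₀ + Y₀) ^ 2 * Real.exp (4 * Y₀) := by positivity
  have hσm : Measurable (fun x => (sigmoid (f x) - sigmoid (g x)) ^ 2) := by
    exact (((sigmoid_continuous.measurable.comp hfm).sub
      (sigmoid_continuous.measurable.comp hgm)).pow_const 2)
  have i2 : Integrable (fun x => (sigmoid (f x) - sigmoid (g x)) ^ 2) μ := by
    apply (integrable_const (1:ℝ)).mono' hσm.aestronglyMeasurable
    filter_upwards with x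
    rw [Real.norm_eq_abs, abs_of_nonneg (sq_nonneg _)]
    have h1 := sigmoid_nonneg (f x); have h2 := sigmoid_le_one (f x)
    have h3 := sigmoid_nonneg (g x); have h4 := sigmoid_le_one (g x)
    nlinarith
  have i1 : Integrable (fun x => (f x - g x) ^ 2) μ := by
    apply (integrable_const ((X₀ + Y₀) ^ 2)).mono'
      (((hfm.sub hgm).pow_const 2)).aestronglyMeasurable
    filter_upwards with x
    rw [Real.norm_eq_abs, abs_of_nonneg (sq_nonneg _)]
    obtain ⟨h1, h2⟩ := abs_le.1 (hf x)
    obtain ⟨h3, h4⟩ := abs_le.1 (hg x)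
    simp only [Pi.sub_apply]
    nlinarith
  calc ∫ x, (f x - g x) ^ 2 ∂μ
      ≤ ∫ x, 64 * (X₀ + Y₀) ^ 2 * Real.exp (4 * Y₀) *
          (sigmoid (f x) - sigmoid (g x)) ^ 2 ∂μ :=
        integral_mono i1 (i2.const_mul _) hpt
    _ = 64 * (X₀ + Y₀) ^ 2 * Real.exp (4 * Y₀) *
          ∫ x, (sigmoid (f x) - sigmoid (g x)) ^ 2 ∂μ := integral_const_mul _ _
end
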